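/- Let O(n) = (1/n) Σ_{d|n} μ(n/d) F(d) where F(d) = 3^{ord_3(2^d - 1)}. Then for all N ≥ 2, the orbit counting function π(N) = Σ_{n ≤ N} O(n) satisfies π(N) = 1 + ⌊log_3(N/2)⌋ + 1 whenever N ≥ 2, i.e., π(N) = log N / log 3 + O(1). -/

import Mathlib

def F3' (d : ℕ) : ℕ := 3 ^ padicValNat 3 (2 ^ d - 1)

noncomputable def O3' (n : ℕ) : ℚ :=
  (1 / (n : ℚ)) * ∑ d ∈ n.divisors, (ArithmeticFunction.moebius (n / d) : ℚ) * (F3' d : ℚ)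

noncomputable def pi3' (N : ℕ) : ℚ := ∑ n ∈ Finset.Icc 1 N, O3' n

instance : Fact (Nat.Prime 3) := ⟨by norm_num⟩

lemma three_dvd_four_pow_sub_one (k : ℕ) : 3 ∣ 4 ^ k - 1 := by
  simpa using Nat.sub_dvd_pow_sub_pow 4 1 k

lemma two_pow_odd (k : ℕ) : (2:ℕ) ^ (2*k+1) = 2 * 4 ^ k := by
  rw [pow_succ, pow_mul]; ring

lemma F3'_odd {n : ℕ} (h : Odd n) : F3' n = 1 := by
  obtain ⟨k, rfl⟩ := h
  unfold F3'
  rw [padicValNat.eq_zero_of_not_dvd, pow_zero]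
  rw [two_pow_odd]
  have h1 := three_dvd_four_pow_sub_one k
  have h2 : 1 ≤ (4:ℕ) ^ k := Nat.one_le_pow _ _ (by norm_num)
  omega

lemma F3'_even (k : ℕ) (hk : k ≠ 0) :
    F3' (2 * k) = 3 ^ (1 + padicValNat 3 k) := by
  unfold F3'
  congr 1
  have h4 : (2:ℕ) ^ (2 * k) = 4 ^ k := by rw [pow_mul]; norm_num
  rw [h4]
  have := padicValNat.pow_sub_pow (p := 3) (x := 4) (y := 1) (by decide)
    (by norm_num) (by norm_num) (by norm_num) hk
  simpa using this

lemma v3_two_mul_pow (j : ℕ) : padicValNat 3 (2 * 3 ^ j) = j := by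
  rw [padicValNat.mul (by norm_num) (by positivity),
    padicValNat.eq_zero_of_not_dvd (by norm_num), padicValNat.prime_pow, zero_add]

/-- the indicator-type function -/
noncomputable def g3 (d : ℕ) : ℚ :=
  if d = 1 ∨ d = 2 * 3 ^ padicValNat 3 d then (d : ℚ) else 0

lemma mem_S_iff {d : ℕ} :
    (d = 1 ∨ d = 2 * 3 ^ padicValNat 3 d) ↔ (d = 1 ∨ ∃ j, d = 2 * 3 ^ j) := by
  constructor
  · rintro (h | h)
    · exact Or.inl h
    · exact Or.inr ⟨_, h⟩
  · rintro (h | ⟨j, rfl⟩)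
    · exact Or.inl h
    · exact Or.inr (by rw [v3_two_mul_pow])

lemma sum_g3 {n : ℕ} (hn : n ≠ 0) :
    ∑ d ∈ n.divisors, g3 d = (F3' n : ℚ) := by
  classical
  have hsum : ∑ d ∈ n.divisors, g3 d
      = ∑ d ∈ n.divisors.filter (fun d => d = 1 ∨ d = 2 * 3 ^ padicValNat 3 d),
          (d : ℚ) := by
    rw [Finset.sum_filter]; rfl
  rcases Nat.even_or_odd n with he | ho
  · -- even case
    obtain ⟨k, rfl⟩ : ∃ k, n = 2 * k := ⟨n / 2, by have := Nat.even_iff.mp he; omega⟩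
    have hk : k ≠ 0 := by rintro rfl; simp at hn
    set b := padicValNat 3 (2 * k) with hb
    have hfil : (2*k).divisors.filter (fun d => d = 1 ∨ d = 2 * 3 ^ padicValNat 3 d)
        = insert 1 ((Finset.range (b+1)).image (fun j => 2 * 3 ^ j)) := by
      ext d
      simp only [Finset.mem_filter, Nat.mem_divisors, Finset.mem_insert,
        Finset.mem_image, Finset.mem_range, mem_S_iff]
      constructor
      · rintro ⟨⟨hd, hn0⟩, (rfl | ⟨j, rfl⟩)⟩
        · exact Or.inl rfl
        · refine Or.inr ⟨j, ?_, rfl⟩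
          have h3j : (3:ℕ) ^ j ∣ 2 * k := dvd_trans (dvd_mul_left _ _) hd
          have := (padicValNat_dvd_iff_le (p := 3) hn0).mp h3j
          omega
      · rintro (rfl | ⟨j, hj, rfl⟩)
        · exact ⟨⟨one_dvd _, hn⟩, Or.inl rfl⟩
        · refine ⟨⟨?_, hn⟩, Or.inr ⟨j, rfl⟩⟩
          have h3j : (3:ℕ) ^ j ∣ 2 * k :=
            (padicValNat_dvd_iff_le (p := 3) hn).mpr (by omega)
          exact Nat.Coprime.mul_dvd_of_dvd_of_dvd
            (Nat.Coprime.pow_right _ (by norm_num)) (dvd_mul_right 2 k) h3j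
    rw [hsum, hfil, Finset.sum_insert, Finset.sum_image]
    · have hv : padicValNat 3 k = b := by
        rw [hb, padicValNat.mul (by norm_num) hk]
        have h2 : padicValNat 3 2 = 0 := padicValNat.eq_zero_of_not_dvd (by norm_num)
        omega
      rw [F3'_even k hk, hv]
      push_cast
      have hgeom : ∑ j ∈ Finset.range (b+1), (3:ℚ) ^ j = ((3:ℚ) ^ (b+1) - 1)/(3-1) :=
        geom_sum_eq (by norm_num) _
      rw [← Finset.mul_sum, hgeom]
      ring
    · intro i _ j _ h
      have : (3:ℕ) ^ i = 3 ^ j := by beta_reduce at h; omega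
      exact Nat.pow_right_injective (by norm_num) this
    · intro hmem1
      simp only [Finset.mem_image, Finset.mem_range] at hmem1
      obtain ⟨j, _, hj⟩ := hmem1
      have : 1 ≤ (3:ℕ) ^ j := Nat.one_le_pow _ _ (by norm_num)
      omega
  · -- odd case
    have hfil : n.divisors.filter (fun d => d = 1 ∨ d = 2 * 3 ^ padicValNat 3 d)
        = {1} := by
      ext d
      simp only [Finset.mem_filter, Nat.mem_divisors, Finset.mem_singleton, mem_S_iff]
      constructor
      · rintro ⟨⟨hd, _⟩, (rfl | ⟨j, rfl⟩)⟩
        · rfl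
        · exfalso
          have : (2:ℕ) ∣ n := dvd_trans (dvd_mul_right 2 _) hd
          exact (Nat.not_even_iff_odd.mpr ho) ((even_iff_two_dvd).mpr this)
      · rintro rfl
        exact ⟨⟨one_dvd _, hn⟩, Or.inl rfl⟩
    rw [hsum, hfil, F3'_odd ho]
    simp

lemma moebius_sum_eq (n : ℕ) (hn : 0 < n) :
    ∑ d ∈ n.divisors, (ArithmeticFunction.moebius (n / d) : ℚ) * (F3' d : ℚ) = g3 n := by
  have key := (ArithmeticFunction.sum_eq_iff_sum_mul_moebius_eq
    (R := ℚ) (f := g3) (g := fun n => (F3' n : ℚ))).mp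
    (fun m hm => sum_g3 hm.ne') n hn
  rw [← key, ← Nat.map_div_left_divisors, Finset.sum_map]
  rfl

lemma O3'_eq {n : ℕ} (hn : n ≠ 0) :
    O3' n = if n = 1 ∨ n = 2 * 3 ^ padicValNat 3 n then 1 else 0 := by
  unfold O3'
  rw [moebius_sum_eq n (Nat.pos_of_ne_zero hn), g3]
  have hnQ : (n : ℚ) ≠ 0 := Nat.cast_ne_zero.mpr hn
  by_cases h : n = 1 ∨ n = 2 * 3 ^ padicValNat 3 n
  · rw [if_pos h, if_pos h]
    field_simp
  · rw [if_neg h, if_neg h]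
    ring

lemma pi3'_eq {N : ℕ} (hN : 2 ≤ N) :
    pi3' N = (Nat.log 3 (N / 2) : ℚ) + 2 := by
  classical
  have hN2 : N / 2 ≠ 0 := by
    have := Nat.one_le_div_iff (by norm_num : 0 < 2) |>.mpr hN
    omega
  set L := Nat.log 3 (N / 2) with hL
  have hmem : ∀ j, 2 * 3 ^ j ≤ N ↔ j ≤ L := by
    intro j
    rw [hL, Nat.le_log_iff_pow_le (by norm_num) hN2,
      Nat.le_div_iff_mul_le (by norm_num)]
    omega
  have hsum : pi3' N = ∑ n ∈ Finset.Icc 1 N,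
      (if n = 1 ∨ n = 2 * 3 ^ padicValNat 3 n then (1:ℚ) else 0) := by
    apply Finset.sum_congr rfl
    intro n hn
    rw [Finset.mem_Icc] at hn
    exact O3'_eq (by omega)
  rw [hsum, ← Finset.sum_filter]
  have hfil : (Finset.Icc 1 N).filter (fun n => n = 1 ∨ n = 2 * 3 ^ padicValNat 3 n)
      = insert 1 ((Finset.range (L+1)).image (fun j => 2 * 3 ^ j)) := by
    ext d
    simp only [Finset.mem_filter, Finset.mem_Icc, Finset.mem_insert,
      Finset.mem_image, Finset.mem_range, mem_S_iff]
    constructor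
    · rintro ⟨⟨_, hdN⟩, (rfl | ⟨j, rfl⟩)⟩
      · exact Or.inl rfl
      · have := (hmem j).mp hdN
        exact Or.inr ⟨j, by omega, rfl⟩
    · rintro (rfl | ⟨j, hj, rfl⟩)
      · exact ⟨⟨le_refl _, by omega⟩, Or.inl rfl⟩
      · have := (hmem j).mpr (by omega)
        have h1 : 1 ≤ (3:ℕ) ^ j := Nat.one_le_pow _ _ (by norm_num)
        exact ⟨⟨by omega, this⟩, Or.inr ⟨j, rfl⟩⟩
  rw [hfil, Finset.sum_insert, Finset.sum_image]
  · simp [Finset.sum_const]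
    push_cast
    ring
  · intro i _ j _ h
    have : (3:ℕ) ^ i = 3 ^ j := by beta_reduce at h; omega
    exact Nat.pow_right_injective (by norm_num) this
  · intro hmem1
    simp only [Finset.mem_image, Finset.mem_range] at hmem1
    obtain ⟨j, _, hj⟩ := hmem1
    have : 1 ≤ (3:ℕ) ^ j := Nat.one_le_pow _ _ (by norm_num)
    omega

theorem orbit_growth_log3 :
    ∃ C : ℝ, ∀ N : ℕ, 2 ≤ N →
      |(pi3' N : ℝ) - Real.log N / Real.log 3| ≤ C := by
  use 2
  intro N hN
  have hN2 : N / 2 ≠ 0 := by omega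
  set L := Nat.log 3 (N / 2) with hL
  have hpi : (pi3' N : ℝ) = (L : ℝ) + 2 := by
    rw [pi3'_eq hN]; push_cast; ring
  have hlog3 : (0:ℝ) < Real.log 3 := Real.log_pos (by norm_num)
  -- lower bound on N : 3^L ≤ N
  have hlow : (3:ℕ) ^ L ≤ N := le_trans (Nat.pow_log_le_self 3 hN2) (Nat.div_le_self _ _)
  -- upper bound : N < 3^(L+2)
  have hup : N < 3 ^ (L + 2) := by
    have h1 : N / 2 < 3 ^ (L + 1) := Nat.lt_pow_succ_log_self (by norm_num) _
    have h2 : (3:ℕ) ^ (L + 2) = 3 * 3 ^ (L+1) := by ring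
    omega
  have hNpos : (0:ℝ) < N := by positivity
  have hlowR : (L : ℝ) * Real.log 3 ≤ Real.log N := by
    have := Real.log_le_log (by positivity) (show ((3:ℕ)^L : ℝ) ≤ (N:ℝ) by exact_mod_cast hlow)
    rwa [show ((3:ℕ)^L : ℝ) = (3:ℝ)^L by push_cast; ring, Real.log_pow] at this
  have hupR : Real.log N ≤ ((L:ℝ) + 2) * Real.log 3 := by
    have := Real.log_le_log hNpos (show (N:ℝ) ≤ ((3:ℕ)^(L+2) : ℝ) by exact_mod_cast hup.le)
    rw [show ((3:ℕ)^(L+2) : ℝ) = (3:ℝ)^(L+2) by push_cast; ring, Real.log_pow] at this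
    push_cast at this
    linarith
  have h1 : (L:ℝ) ≤ Real.log N / Real.log 3 := (le_div_iff₀ hlog3).mpr hlowR
  have h2 : Real.log N / Real.log 3 ≤ (L:ℝ) + 2 := (div_le_iff₀ hlog3).mpr hupR
  rw [hpi, abs_le]
  constructor <;> linarith
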